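/- Let 𝒯 be a monoid of transformations of a nonempty set X such that 𝒯* has the Moore–Smith property, and let L be a weakly 𝒯-invariant coherent lower prevision on all gambles on X (L(f∘T) ≥ L(f) for all gambles f, T ∈ 𝒯). Then for every gamble f the net (L(T*f))_{T*∈𝒯*}, directed by the successor relation, converges to the real number Q(f) := sup_{T*∈𝒯*} L(T*f), and moreover Q(f) = sup { L( (1/n) Σ_{k=1}^n f∘T_k ) : n ≥ 1, T₁,…,T_n ∈ 𝒯 }. The functional Q is the point-wise smallest strongly 𝒯-invariant coherent lower prevision on all gambles that dominates L (i.e. Q is a coherent lower prevision with Q(f − f∘T) ≥ 0 and Q(f∘T − f) ≥ 0 for all gambles f and T ∈ 𝒯, Q ≥ L point-wise, and every coherent lower prevision with these properties dominates Q). -/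

import Mathlib

def IsGamble {X : Type*} (f : X → ℝ) : Prop :=
  BddAbove (Set.range f) ∧ BddBelow (Set.range f)

def IsCoherentLowerPrevision {X : Type*} (L : (X → ℝ) → ℝ) : Prop :=
  (∀ f : X → ℝ, IsGamble f → sInf (Set.range f) ≤ L f) ∧
  (∀ f g : X → ℝ, IsGamble f → IsGamble g → L f + L g ≤ L (f + g)) ∧
  (∀ f : X → ℝ, IsGamble f → ∀ c : ℝ, 0 ≤ c → L (c • f) = c * L f)

def IsCoherentPrevision {X : Type*} (P : (X → ℝ) → ℝ) : Prop :=
  (∀ f g : X → ℝ, IsGamble f → IsGamble g → P (f + g) = P f + P g) ∧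
  (∀ f : X → ℝ, IsGamble f → sInf (Set.range f) ≤ P f)

def IsTransformationMonoid {X : Type*} (𝒯 : Set (X → X)) : Prop :=
  id ∈ 𝒯 ∧ ∀ S ∈ 𝒯, ∀ T ∈ 𝒯, S ∘ T ∈ 𝒯

def Dominating {X : Type*} (L : (X → ℝ) → ℝ) : Set ((X → ℝ) → ℝ) :=
  {P | IsCoherentPrevision P ∧ ∀ f : X → ℝ, IsGamble f → L f ≤ P f}

def ConvMix {X : Type*} (𝒯 : Set (X → X)) : Set ((X → ℝ) → (X → ℝ)) :=
  {S | ∃ (n : ℕ) (lam : Fin n → ℝ) (Ts : Fin n → X → X),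
    (∀ k, 0 ≤ lam k) ∧ (∑ k, lam k = 1) ∧ (∀ k, Ts k ∈ 𝒯) ∧
    S = fun f x => ∑ k, lam k * f (Ts k x)}

def Succ {X : Type*} (𝒯 : Set (X → X)) (S₂ S₁ : (X → ℝ) → (X → ℝ)) : Prop :=
  ∃ S ∈ ConvMix 𝒯, S₂ = S ∘ S₁

def MooreSmith {X : Type*} (𝒯 : Set (X → X)) : Prop :=
  ∀ S₁ ∈ ConvMix 𝒯, ∀ S₂ ∈ ConvMix 𝒯,
    ∃ S ∈ ConvMix 𝒯, Succ 𝒯 S S₁ ∧ Succ 𝒯 S S₂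

noncomputable def Qfun {X : Type*} (𝒯 : Set (X → X)) (L : (X → ℝ) → ℝ)
    (f : X → ℝ) : ℝ :=
  sSup {r : ℝ | ∃ S ∈ ConvMix 𝒯, r = L (S f)}

set_option linter.unusedSectionVars false



lemma isGamble_iff {X : Type*} {f : X → ℝ} :
    IsGamble f ↔ ∃ M : ℝ, ∀ x, |f x| ≤ M := by
  constructor
  · rintro ⟨⟨a, ha⟩, ⟨b, hb⟩⟩
    refine ⟨|a| + |b|, fun x => ?_⟩
    have h1 : f x ≤ a := ha ⟨x, rfl⟩
    have h2 : b ≤ f x := hb ⟨x, rfl⟩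
    have := le_abs_self a
    have := neg_abs_le b
    rw [abs_le]
    constructor <;> nlinarith [abs_nonneg a, abs_nonneg b]
  · rintro ⟨M, hM⟩
    constructor
    · exact ⟨M, by rintro r ⟨x, rfl⟩; exact (abs_le.1 (hM x)).2⟩
    · exact ⟨-M, by rintro r ⟨x, rfl⟩; exact (abs_le.1 (hM x)).1⟩

lemma gamble_zero {X : Type*} : IsGamble (0 : X → ℝ) :=
  isGamble_iff.2 ⟨0, fun x => by simp⟩

lemma gamble_add {X : Type*} {f g : X → ℝ} (hf : IsGamble f) (hg : IsGamble g) :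
    IsGamble (f + g) := by
  obtain ⟨M, hM⟩ := isGamble_iff.1 hf
  obtain ⟨M', hM'⟩ := isGamble_iff.1 hg
  exact isGamble_iff.2 ⟨M + M', fun x => (abs_add_le _ _).trans (add_le_add (hM x) (hM' x))⟩

lemma gamble_neg {X : Type*} {f : X → ℝ} (hf : IsGamble f) : IsGamble (-f) := by
  obtain ⟨M, hM⟩ := isGamble_iff.1 hf
  exact isGamble_iff.2 ⟨M, fun x => by simpa using hM x⟩

lemma gamble_sub {X : Type*} {f g : X → ℝ} (hf : IsGamble f) (hg : IsGamble g) :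
    IsGamble (f - g) := by
  rw [sub_eq_add_neg]; exact gamble_add hf (gamble_neg hg)

lemma gamble_smul {X : Type*} {f : X → ℝ} (hf : IsGamble f) (c : ℝ) :
    IsGamble (c • f) := by
  obtain ⟨M, hM⟩ := isGamble_iff.1 hf
  exact isGamble_iff.2 ⟨|c| * M, fun x => by
    simp only [Pi.smul_apply, smul_eq_mul, abs_mul]
    exact mul_le_mul_of_nonneg_left (hM x) (abs_nonneg c)⟩

lemma gamble_comp {X : Type*} {f : X → ℝ} (hf : IsGamble f) (T : X → X) :
    IsGamble (f ∘ T) := by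
  obtain ⟨M, hM⟩ := isGamble_iff.1 hf
  exact isGamble_iff.2 ⟨M, fun x => hM (T x)⟩

lemma gamble_sum {X : Type*} {ι : Type*} (s : Finset ι) (g : ι → X → ℝ)
    (hg : ∀ k, IsGamble (g k)) : IsGamble (∑ k ∈ s, g k) := by
  classical
  induction s using Finset.induction_on with
  | empty => simpa using gamble_zero
  | insert _ _ h ih => rw [Finset.sum_insert h]; exact gamble_add (hg _) ih

section L
variable {X : Type*} [Nonempty X] {L : (X → ℝ) → ℝ} (hL : IsCoherentLowerPrevision L)
include hL

lemma L_lower {g : X → ℝ} (hg : IsGamble g) {a : ℝ} (ha : ∀ x, a ≤ g x) : a ≤ L g :=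
  le_trans (le_csInf (Set.range_nonempty g) (by rintro r ⟨x, rfl⟩; exact ha x)) (hL.1 g hg)

lemma L_zero : L 0 = 0 := by
  have := hL.2.2 0 gamble_zero 0 le_rfl
  simpa using this

lemma L_upper {g : X → ℝ} (hg : IsGamble g) {b : ℝ} (hb : ∀ x, g x ≤ b) : L g ≤ b := by
  have h1 := hL.2.1 g (-g) hg (gamble_neg hg)
  have h2 : g + -g = 0 := by funext x; simp
  rw [h2, L_zero hL] at h1
  have h3 : -b ≤ L (-g) := L_lower hL (gamble_neg hg) (fun x => by simpa using hb x)
  linarith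

lemma L_le_add {g h : X → ℝ} (hg : IsGamble g) (hh : IsGamble h) {c : ℝ}
    (hc : ∀ x, g x ≤ h x + c) : L g ≤ L h + c := by
  have h1 := hL.2.1 g (h - g) hg (gamble_sub hh hg)
  have h2 : g + (h - g) = h := by funext x; simp
  rw [h2] at h1
  have h3 : -c ≤ L (h - g) :=
    L_lower hL (gamble_sub hh hg) (fun x => by have := hc x; simp [Pi.sub_apply]; linarith)
  linarith

lemma L_sum {ι : Type*} (s : Finset ι) (g : ι → X → ℝ) (hg : ∀ k, IsGamble (g k)) :
    ∑ k ∈ s, L (g k) ≤ L (∑ k ∈ s, g k) := by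
  classical
  induction s using Finset.induction_on with
  | empty => simp [L_zero hL]
  | @insert a s h ih =>
    rw [Finset.sum_insert h, Finset.sum_insert h]
    calc L (g a) + ∑ k ∈ s, L (g k) ≤ L (g a) + L (∑ k ∈ s, g k) := by linarith
    _ ≤ L (g a + ∑ k ∈ s, g k) := hL.2.1 _ _ (hg a) (gamble_sum s g hg)

lemma L_wsum {ι : Type*} [Fintype ι] (c : ι → ℝ) (hc : ∀ k, 0 ≤ c k)
    (g : ι → X → ℝ) (hg : ∀ k, IsGamble (g k)) :
    ∑ k, c k * L (g k) ≤ L (∑ k, c k • g k) := by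
  have h1 : ∀ k : ι, L (c k • g k) = c k * L (g k) := fun k => hL.2.2 (g k) (hg k) (c k) (hc k)
  calc ∑ k, c k * L (g k) = ∑ k, L (c k • g k) := by simp_rw [h1]
  _ ≤ L (∑ k, c k • g k) := L_sum hL _ _ (fun k => gamble_smul (hg k) (c k))

end L

set_option linter.unusedSectionVars false






section Mix
variable {X : Type*} [Nonempty X] {𝒯 : Set (X → X)}

lemma mix_rep {S : (X → ℝ) → (X → ℝ)} (hS : S ∈ ConvMix 𝒯) (f : X → ℝ) :
    ∃ (n : ℕ) (lam : Fin n → ℝ) (Ts : Fin n → X → X),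
    (∀ k, 0 ≤ lam k) ∧ (∑ k, lam k = 1) ∧ (∀ k, Ts k ∈ 𝒯) ∧
    S f = ∑ k, lam k • (f ∘ Ts k) := by
  obtain ⟨n, lam, Ts, h0, h1, hT, rfl⟩ := hS
  exact ⟨n, lam, Ts, h0, h1, hT, by funext x; simp [Finset.sum_apply]⟩

lemma mix_bound {S : (X → ℝ) → (X → ℝ)} (hS : S ∈ ConvMix 𝒯) {f : X → ℝ} {M : ℝ}
    (hM : ∀ x, |f x| ≤ M) : ∀ x, |S f x| ≤ M := by
  obtain ⟨n, lam, Ts, h0, h1, hT, rfl⟩ := hS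
  intro x
  calc |∑ k, lam k * f (Ts k x)| ≤ ∑ k, |lam k * f (Ts k x)| := Finset.abs_sum_le_sum_abs _ _
  _ ≤ ∑ k, lam k * M := by
      refine Finset.sum_le_sum fun k _ => ?_
      rw [abs_mul, abs_of_nonneg (h0 k)]
      exact mul_le_mul_of_nonneg_left (hM _) (h0 k)
  _ = M := by rw [← Finset.sum_mul, h1, one_mul]

lemma mix_gamble {S : (X → ℝ) → (X → ℝ)} (hS : S ∈ ConvMix 𝒯) {f : X → ℝ}
    (hf : IsGamble f) : IsGamble (S f) := by
  obtain ⟨M, hM⟩ := isGamble_iff.1 hf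
  exact isGamble_iff.2 ⟨M, mix_bound hS hM⟩

variable {L : (X → ℝ) → ℝ}

lemma mix_mono (hL : IsCoherentLowerPrevision L)
    (hweak : ∀ f : X → ℝ, IsGamble f → ∀ T ∈ 𝒯, L f ≤ L (f ∘ T)) {S : (X → ℝ) → (X → ℝ)} (hS : S ∈ ConvMix 𝒯) {f : X → ℝ}
    (hf : IsGamble f) : L f ≤ L (S f) := by
  obtain ⟨n, lam, Ts, h0, h1, hT, hrep⟩ := mix_rep hS f
  rw [hrep]
  calc L f = ∑ k, lam k * L f := by rw [← Finset.sum_mul, h1, one_mul]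
  _ ≤ ∑ k, lam k * L (f ∘ Ts k) := by
      refine Finset.sum_le_sum fun k _ => ?_
      exact mul_le_mul_of_nonneg_left (hweak f hf (Ts k) (hT k)) (h0 k)
  _ ≤ L (∑ k, lam k • (f ∘ Ts k)) :=
      L_wsum hL lam h0 _ (fun k => gamble_comp hf (Ts k))

lemma mix_add {S : (X → ℝ) → (X → ℝ)} (hS : S ∈ ConvMix 𝒯) (f g : X → ℝ) :
    S (f + g) = S f + S g := by
  obtain ⟨n, lam, Ts, h0, h1, hT, rfl⟩ := hS
  funext x
  simp [Finset.sum_add_distrib, mul_add]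

lemma mix_smul {S : (X → ℝ) → (X → ℝ)} (hS : S ∈ ConvMix 𝒯) (c : ℝ) (f : X → ℝ) :
    S (c • f) = c • S f := by
  obtain ⟨n, lam, Ts, h0, h1, hT, rfl⟩ := hS
  funext x
  simp only [Pi.smul_apply, smul_eq_mul, Finset.mul_sum]
  exact Finset.sum_congr rfl fun k _ => by ring

lemma id_mix (h𝒯 : IsTransformationMonoid 𝒯) : (fun f : X → ℝ => f) ∈ ConvMix 𝒯 := by
  refine ⟨1, fun _ => 1, fun _ => id, fun _ => zero_le_one, by simp, fun _ => h𝒯.1, ?_⟩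
  funext f x; simp

lemma Qset_nonempty (L : (X → ℝ) → ℝ) (h𝒯 : IsTransformationMonoid 𝒯) (f : X → ℝ) :
    {r : ℝ | ∃ S ∈ ConvMix 𝒯, r = L (S f)}.Nonempty :=
  ⟨L f, ⟨_, id_mix h𝒯, rfl⟩⟩

lemma Qset_bdd (hL : IsCoherentLowerPrevision L) (f : X → ℝ) (hf : IsGamble f) :
    BddAbove {r : ℝ | ∃ S ∈ ConvMix 𝒯, r = L (S f)} := by
  obtain ⟨M, hM⟩ := isGamble_iff.1 hf
  refine ⟨M, ?_⟩
  rintro r ⟨S, hS, rfl⟩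
  exact L_upper hL (mix_gamble hS hf) (fun x => (abs_le.1 (mix_bound hS hM x)).2)

lemma Q_ge (hL : IsCoherentLowerPrevision L) {S : (X → ℝ) → (X → ℝ)} (hS : S ∈ ConvMix 𝒯) {f : X → ℝ}
    (hf : IsGamble f) : L (S f) ≤ Qfun 𝒯 L f :=
  le_csSup (Qset_bdd hL f hf) ⟨S, hS, rfl⟩

lemma Q_le_of (hL : IsCoherentLowerPrevision L) (h𝒯 : IsTransformationMonoid 𝒯) {f : X → ℝ} {b : ℝ}
    (hb : ∀ S ∈ ConvMix 𝒯, L (S f) ≤ b) : Qfun 𝒯 L f ≤ b :=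
  csSup_le (Qset_nonempty L h𝒯 f) (by rintro r ⟨S, hS, rfl⟩; exact hb S hS)

lemma Q_ge_L (hL : IsCoherentLowerPrevision L) (h𝒯 : IsTransformationMonoid 𝒯) {f : X → ℝ} (hf : IsGamble f) :
    L f ≤ Qfun 𝒯 L f := by
  have := Q_ge hL (id_mix h𝒯) hf (S := fun f => f)
  simpa using this

end Mix

section Parts
variable {X : Type*} [Nonempty X] {𝒯 : Set (X → X)} {L : (X → ℝ) → ℝ}
  (hL : IsCoherentLowerPrevision L) (h𝒯 : IsTransformationMonoid 𝒯)
  (hweak : ∀ f : X → ℝ, IsGamble f → ∀ T ∈ 𝒯, L f ≤ L (f ∘ T))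
include hL h𝒯 hweak

lemma part1 :
    ∀ f : X → ℝ, IsGamble f → ∀ ε : ℝ, 0 < ε → ∃ S₀ ∈ ConvMix 𝒯,
        ∀ S ∈ ConvMix 𝒯, Succ 𝒯 S S₀ → |L (S f) - Qfun 𝒯 L f| < ε := by
  intro f hf ε hε
  obtain ⟨r, ⟨S₀, hS₀, rfl⟩, hr⟩ :=
    exists_lt_of_lt_csSup (Qset_nonempty L h𝒯 f) (show Qfun 𝒯 L f - ε < Qfun 𝒯 L f by linarith)
  refine ⟨S₀, hS₀, fun S hS hsucc => ?_⟩
  obtain ⟨S', hS', rfl⟩ := hsucc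
  have h1 : L (S₀ f) ≤ L (S' (S₀ f)) := mix_mono hL hweak hS' (mix_gamble hS₀ hf)
  have h2 : L ((S' ∘ S₀) f) ≤ Qfun 𝒯 L f := Q_ge hL hS hf
  have h3 : L ((S' ∘ S₀) f) = L (S' (S₀ f)) := rfl
  rw [abs_sub_lt_iff]
  constructor <;> linarith

lemma part3 (hMS : MooreSmith 𝒯) : IsCoherentLowerPrevision (Qfun 𝒯 L) := by
  refine ⟨fun f hf => le_trans (hL.1 f hf) (Q_ge_L hL h𝒯 hf), ?_, ?_⟩
  · intro f g hf hg
    refine le_of_forall_pos_le_add fun ε hε => ?_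
    have hε2 : 0 < ε / 2 := by linarith
    obtain ⟨r₁, ⟨S₁, hS₁, rfl⟩, hr₁⟩ :=
      exists_lt_of_lt_csSup (Qset_nonempty L h𝒯 f)
        (show Qfun 𝒯 L f - ε/2 < Qfun 𝒯 L f by linarith)
    obtain ⟨r₂, ⟨S₂, hS₂, rfl⟩, hr₂⟩ :=
      exists_lt_of_lt_csSup (Qset_nonempty L h𝒯 g)
        (show Qfun 𝒯 L g - ε/2 < Qfun 𝒯 L g by linarith)
    obtain ⟨S, hS, ⟨A, hA, rfl⟩, ⟨B, hB, hSB⟩⟩ := hMS S₁ hS₁ S₂ hS₂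
    have m1 : L (S₁ f) ≤ L ((A ∘ S₁) f) := mix_mono hL hweak hA (mix_gamble hS₁ hf)
    have m2 : L (S₂ g) ≤ L ((A ∘ S₁) g) := by
      rw [hSB]; exact mix_mono hL hweak hB (mix_gamble hS₂ hg)
    have hadd : L ((A ∘ S₁) f) + L ((A ∘ S₁) g) ≤ L ((A ∘ S₁) (f + g)) := by
      rw [mix_add hS]
      exact hL.2.1 _ _ (mix_gamble hS hf) (mix_gamble hS hg)
    have hq : L ((A ∘ S₁) (f + g)) ≤ Qfun 𝒯 L (f + g) := Q_ge hL hS (gamble_add hf hg)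
    linarith
  · intro f hf c hc
    rcases eq_or_lt_of_le hc with hc0 | hc0
    · have hzf : c • f = (0 : X → ℝ) := by rw [← hc0]; simp
      rw [hzf, ← hc0, zero_mul]
      have hset : {r : ℝ | ∃ S ∈ ConvMix 𝒯, r = L (S (0 : X → ℝ))} = {0} := by
        ext r
        simp only [Set.mem_setOf_eq, Set.mem_singleton_iff]
        constructor
        · rintro ⟨S, hS, rfl⟩
          obtain ⟨n, lam, Ts, h0, h1, hT, rfl⟩ := hS
          have : (fun (f : X → ℝ) x => ∑ k, lam k * f (Ts k x)) 0 = (0 : X → ℝ) := by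
            funext x; simp
          rw [this, L_zero hL]
        · rintro rfl
          exact ⟨_, id_mix h𝒯, (L_zero hL).symm⟩
      rw [Qfun, hset, csSup_singleton]
    · apply le_antisymm
      · apply Q_le_of hL h𝒯
        intro S hS
        rw [mix_smul hS, hL.2.2 (S f) (mix_gamble hS hf) c hc]
        exact mul_le_mul_of_nonneg_left (Q_ge hL hS hf) hc
      · have h1 : Qfun 𝒯 L f ≤ Qfun 𝒯 L (c • f) / c := by
          apply Q_le_of hL h𝒯
          intro S hS
          rw [le_div_iff₀ hc0, mul_comm]
          calc c * L (S f) = L (c • S f) := (hL.2.2 (S f) (mix_gamble hS hf) c hc).symm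
          _ = L (S (c • f)) := by rw [mix_smul hS]
          _ ≤ Qfun 𝒯 L (c • f) := Q_ge hL hS (gamble_smul hf c)
        calc c * Qfun 𝒯 L f ≤ c * (Qfun 𝒯 L (c • f) / c) :=
              mul_le_mul_of_nonneg_left h1 hc
        _ = Qfun 𝒯 L (c • f) := by field_simp

lemma iter_mem {T : X → X} (hT : T ∈ 𝒯) : ∀ k : ℕ, T^[k] ∈ 𝒯
  | 0 => by simpa using h𝒯.1
  | (k+1) => by
      rw [Function.iterate_succ']
      exact h𝒯.2 T hT _ (iter_mem hT k)

lemma avg_mix {T : X → X} (hT : T ∈ 𝒯) (K : ℕ) :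
    (fun (g : X → ℝ) x => ∑ k : Fin (K+1), (1/((K:ℝ)+1)) * g (T^[(k:ℕ)] x)) ∈ ConvMix 𝒯 := by
  refine ⟨K+1, fun _ => 1/((K:ℝ)+1), fun k => T^[(k:ℕ)], fun _ => by positivity, ?_,
    fun k => iter_mem hL h𝒯 hweak hT _, rfl⟩
  rw [Finset.sum_const, Finset.card_univ, Fintype.card_fin, nsmul_eq_mul]
  push_cast
  field_simp

lemma part4 :
    ∀ f : X → ℝ, IsGamble f → ∀ T ∈ 𝒯,
        0 ≤ Qfun 𝒯 L (f - f ∘ T) ∧ 0 ≤ Qfun 𝒯 L (f ∘ T - f) := by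
  intro f hf T hT
  obtain ⟨M, hM⟩ := isGamble_iff.1 hf
  have hM0 : 0 ≤ M := le_trans (abs_nonneg _) (hM (Classical.arbitrary X))
  have key : ∀ g : X → ℝ, IsGamble g →
      (∀ (K : ℕ) (x : X), |∑ k : Fin (K+1), (1/((K:ℝ)+1)) * g (T^[(k:ℕ)] x)| ≤ 2*M/((K:ℝ)+1)) →
      0 ≤ Qfun 𝒯 L g := by
    intro g hg hbound
    rw [← neg_zero]
    refine le_of_forall_pos_le_add fun ε hε => ?_
    obtain ⟨K, hK⟩ := exists_nat_gt (2*M/ε)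
    have hK1 : (0:ℝ) < (K:ℝ) + 1 := by positivity
    have hKε : 2*M/((K:ℝ)+1) < ε := by
      rw [div_lt_iff₀ hK1]
      have h2 : 2*M < ε * K := by
        rw [div_lt_iff₀ hε] at hK
        linarith [mul_comm ε (K:ℝ)]
      nlinarith
    have h1 : -(2*M/((K:ℝ)+1)) ≤ L (fun x => ∑ k : Fin (K+1), (1/((K:ℝ)+1)) * g (T^[(k:ℕ)] x)) := by
      apply L_lower hL (mix_gamble (avg_mix hL h𝒯 hweak hT K) hg)
      intro x
      exact neg_le_of_abs_le (hbound K x)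
    have h2 := Q_ge hL (avg_mix hL h𝒯 hweak hT K) hg
    have h2' : L (fun x => ∑ k : Fin (K+1), (1/((K:ℝ)+1)) * g (T^[(k:ℕ)] x)) ≤ Qfun 𝒯 L g := h2
    linarith
  have tele : ∀ (K : ℕ) (x : X),
      ∑ k : Fin (K+1), (f (T^[(k:ℕ)] x) - f (T^[(k:ℕ)+1] x)) = f x - f (T^[K+1] x) := by
    intro K x
    rw [Fin.sum_univ_eq_sum_range (fun i => f (T^[i] x) - f (T^[i+1] x)) (K+1),
      Finset.sum_range_sub' (fun i => f (T^[i] x))]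
    simp
  constructor
  · apply key _ (gamble_sub hf (gamble_comp hf T))
    intro K x
    have hK1 : (0:ℝ) < (K:ℝ) + 1 := by positivity
    have hsum : ∑ k : Fin (K+1), (1/((K:ℝ)+1)) * (f - f ∘ T) (T^[(k:ℕ)] x)
        = (1/((K:ℝ)+1)) * (f x - f (T^[K+1] x)) := by
      rw [← Finset.mul_sum]
      congr 1
      rw [← tele K x]
      refine Finset.sum_congr rfl fun k _ => ?_
      simp [Function.iterate_succ_apply']
    rw [hsum, abs_mul, abs_of_pos (by positivity : (0:ℝ) < 1/((K:ℝ)+1))]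
    rw [div_eq_mul_inv (2*M), mul_comm (2*M), ← one_div]
    apply mul_le_mul_of_nonneg_left _ (le_of_lt (by positivity))
    calc |f x - f (T^[K+1] x)| ≤ |f x| + |f (T^[K+1] x)| := abs_sub _ _
    _ ≤ M + M := add_le_add (hM x) (hM _)
    _ = 2*M := by ring
  · apply key _ (gamble_sub (gamble_comp hf T) hf)
    intro K x
    have hsum : ∑ k : Fin (K+1), (1/((K:ℝ)+1)) * (f ∘ T - f) (T^[(k:ℕ)] x)
        = (1/((K:ℝ)+1)) * (f (T^[K+1] x) - f x) := by
      rw [← Finset.mul_sum]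
      congr 1
      have : ∑ k : Fin (K+1), (f ∘ T - f) (T^[(k:ℕ)] x)
          = ∑ k : Fin (K+1), (f (T^[(k:ℕ)+1] x) - f (T^[(k:ℕ)] x)) := by
        refine Finset.sum_congr rfl fun k _ => ?_
        simp [Function.iterate_succ_apply']
      rw [this, Fin.sum_univ_eq_sum_range (fun i => f (T^[i+1] x) - f (T^[i] x)) (K+1),
        Finset.sum_range_sub (fun i => f (T^[i] x))]
      simp
    rw [hsum, abs_mul, abs_of_pos (by positivity : (0:ℝ) < 1/((K:ℝ)+1))]
    rw [div_eq_mul_inv (2*M), mul_comm (2*M), ← one_div]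
    apply mul_le_mul_of_nonneg_left _ (le_of_lt (by positivity))
    calc |f (T^[K+1] x) - f x| ≤ |f (T^[K+1] x)| + |f x| := abs_sub _ _
    _ ≤ M + M := add_le_add (hM _) (hM x)
    _ = 2*M := by ring

lemma part6 :
    ∀ M : (X → ℝ) → ℝ, IsCoherentLowerPrevision M →
      (∀ f : X → ℝ, IsGamble f → ∀ T ∈ 𝒯,
        0 ≤ M (f - f ∘ T) ∧ 0 ≤ M (f ∘ T - f)) →
      (∀ f : X → ℝ, IsGamble f → L f ≤ M f) →
      ∀ f : X → ℝ, IsGamble f → Qfun 𝒯 L f ≤ M f := by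
  intro M hM hMinv hML f hf
  apply Q_le_of hL h𝒯
  intro S hS
  have hSf : IsGamble (S f) := mix_gamble hS hf
  obtain ⟨n, lam, Ts, h0, h1, hT, hrep⟩ := mix_rep hS f
  have hfs : f - S f = ∑ k, lam k • (f - f ∘ Ts k) := by
    funext x
    rw [hrep]
    simp only [Pi.sub_apply, Finset.sum_apply, Pi.smul_apply, smul_eq_mul,
      Function.comp_apply, mul_sub]
    rw [Finset.sum_sub_distrib, ← Finset.sum_mul, h1, one_mul]
  have h0' : 0 ≤ M (f - S f) := by
    rw [hfs]
    refine le_trans ?_ (L_wsum hM lam h0 _ (fun k => gamble_sub hf (gamble_comp hf (Ts k))))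
    refine Finset.sum_nonneg fun k _ => ?_
    exact mul_nonneg (h0 k) ((hMinv f hf (Ts k) (hT k)).1)
  have hsum : M (S f) + M (f - S f) ≤ M (S f + (f - S f)) :=
    hM.2.1 _ _ hSf (gamble_sub hf hSf)
  have heq : S f + (f - S f) = f := by funext x; simp
  rw [heq] at hsum
  have := hML (S f) hSf
  linarith

end Parts

lemma list_map_sum_get {α : Type*} (l : List α) (g : α → ℝ) :
    (l.map g).sum = ∑ i : Fin l.length, g (l.get i) := by
  conv_lhs => rw [← List.ofFn_get l]
  rw [List.map_ofFn, List.sum_ofFn]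
  rfl

lemma multiList {α : Type*} (n : ℕ) (m : Fin n → ℕ) (T : Fin n → α) :
    ∃ l : List α, l.length = ∑ k, m k ∧ (∀ a ∈ l, ∃ k, a = T k) ∧
      ∀ g : α → ℝ, (l.map g).sum = ∑ k, (m k : ℝ) * g (T k) := by
  refine ⟨(List.ofFn fun k => List.replicate (m k) (T k)).flatten, ?_, ?_, ?_⟩
  · rw [List.length_flatten, List.map_ofFn, List.sum_ofFn]
    simp [Function.comp]
  · intro a ha
    rw [List.mem_flatten] at ha
    obtain ⟨l', hl', ha⟩ := ha
    rw [List.mem_ofFn] at hl'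
    obtain ⟨k, rfl⟩ := hl'
    exact ⟨k, (List.eq_of_mem_replicate ha)⟩
  · intro g
    rw [List.map_flatten, List.map_ofFn, List.sum_flatten, List.map_ofFn, List.sum_ofFn]
    congr 1
    funext k
    simp [List.map_replicate, List.sum_replicate, nsmul_eq_mul, Function.comp]

section Part2
variable {X : Type*} [Nonempty X] {𝒯 : Set (X → X)} {L : (X → ℝ) → ℝ}
  (hL : IsCoherentLowerPrevision L) (h𝒯 : IsTransformationMonoid 𝒯)
include hL h𝒯

lemma part2 :
    ∀ f : X → ℝ, IsGamble f →
        Qfun 𝒯 L f = sSup {r : ℝ | ∃ (n : ℕ) (Ts : Fin (n+1) → X → X),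
          (∀ k, Ts k ∈ 𝒯) ∧
          r = L (fun x => (∑ k, f (Ts k x)) / ((n : ℝ) + 1))} := by
  intro f hf
  set U := {r : ℝ | ∃ (n : ℕ) (Ts : Fin (n+1) → X → X),
          (∀ k, Ts k ∈ 𝒯) ∧
          r = L (fun x => (∑ k, f (Ts k x)) / ((n : ℝ) + 1))} with hUdef
  have hsub : U ⊆ {r : ℝ | ∃ S ∈ ConvMix 𝒯, r = L (S f)} := by
    rintro r ⟨n, Ts, hTs, rfl⟩
    refine ⟨fun g x => ∑ k : Fin (n+1), (1/((n:ℝ)+1)) * g (Ts k x),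
      ⟨n+1, fun _ => 1/((n:ℝ)+1), Ts, fun _ => by positivity, ?_, hTs, rfl⟩, ?_⟩
    · rw [Finset.sum_const, Finset.card_univ, Fintype.card_fin, nsmul_eq_mul]
      push_cast
      field_simp
    · congr 1
      funext x
      rw [Finset.sum_div]
      exact Finset.sum_congr rfl fun k _ => by ring
  have hUne : U.Nonempty := ⟨_, ⟨0, fun _ => id, fun _ => h𝒯.1, rfl⟩⟩
  have hUbdd : BddAbove U := (Qset_bdd hL f hf).mono hsub
  apply le_antisymm
  · apply Q_le_of hL h𝒯
    intro S hS
    refine le_of_forall_pos_le_add fun ε hε => ?_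
    obtain ⟨n, lam, Ts, h0, h1, hT, hSdef⟩ := hS
    have hSfg : IsGamble (S f) := mix_gamble ⟨n, lam, Ts, h0, h1, hT, hSdef⟩ hf
    have hSf : S f = fun x => ∑ k, lam k * f (Ts k x) := by rw [hSdef]
    obtain ⟨M₀, hM₀⟩ := isGamble_iff.1 hf
    set M := |M₀| with hMdef
    have hM : ∀ x, |f x| ≤ M := fun x => (hM₀ x).trans (le_abs_self M₀)
    have hM0 : 0 ≤ M := abs_nonneg M₀
    obtain ⟨K, hK⟩ := exists_nat_gt (2*(n:ℝ)*M/ε)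
    have hN : (0:ℝ) < (K:ℝ)+1 := by positivity
    have hC : 2*(n:ℝ)*M < ε * ((K:ℝ)+1) := by
      rw [div_lt_iff₀ hε] at hK
      nlinarith
    set m : Fin n → ℕ := fun k => ⌊lam k * ((K:ℝ)+1)⌋₊ with hmdef
    have hm_le : ∀ k, (m k:ℝ) ≤ lam k * ((K:ℝ)+1) :=
      fun k => Nat.floor_le (mul_nonneg (h0 k) hN.le)
    have hm_gt : ∀ k, lam k * ((K:ℝ)+1) < (m k:ℝ) + 1 := fun k => Nat.lt_floor_add_one _
    have hsumR : ∑ k, (m k:ℝ) ≤ (K:ℝ)+1 := by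
      calc ∑ k, (m k:ℝ) ≤ ∑ k, lam k * ((K:ℝ)+1) := Finset.sum_le_sum fun k _ => hm_le k
      _ = (K:ℝ)+1 := by rw [← Finset.sum_mul, h1, one_mul]
    have hsum_nat : ∑ k, m k ≤ K+1 := by exact_mod_cast (by push_cast; exact hsumR : ((∑ k, m k : ℕ):ℝ) ≤ ((K+1 : ℕ):ℝ))
    set d : ℕ := (K+1) - ∑ k, m k with hddef
    have hdR : (d:ℝ) = ((K:ℝ)+1) - ∑ k, (m k:ℝ) := by
      rw [hddef, Nat.cast_sub hsum_nat]
      push_cast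
      ring
    have hd_le : (d:ℝ) ≤ (n:ℝ) := by
      have hsum_ge : ((K:ℝ)+1) ≤ (∑ k, (m k:ℝ)) + n := by
        have : ((K:ℝ)+1) = ∑ k, lam k * ((K:ℝ)+1) := by rw [← Finset.sum_mul, h1, one_mul]
        rw [this]
        calc ∑ k, lam k * ((K:ℝ)+1) ≤ ∑ k, ((m k:ℝ) + 1) :=
              Finset.sum_le_sum fun k _ => (hm_gt k).le
        _ = (∑ k, (m k:ℝ)) + n := by rw [Finset.sum_add_distrib]; simp
      linarith [hdR]
    set m' : Fin (n+1) → ℕ := Fin.snoc m d with hm'def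
    set Ts' : Fin (n+1) → X → X := Fin.snoc Ts id with hTs'def
    have hTs'mem : ∀ k, Ts' k ∈ 𝒯 := by
      intro k
      induction k using Fin.lastCases with
      | last => simp only [hTs'def, Fin.snoc_last]; exact h𝒯.1
      | cast k => simp only [hTs'def, Fin.snoc_castSucc]; exact hT k
    have hNsum : ∑ k, m' k = K+1 := by
      rw [Fin.sum_univ_castSucc]
      simp only [hm'def, Fin.snoc_castSucc, Fin.snoc_last]
      exact Nat.add_sub_cancel' hsum_nat
    obtain ⟨l, hlen, hmem, hsuml⟩ := multiList (n+1) m' Ts'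
    have hlenN : l.length = K+1 := hlen.trans hNsum
    set Ts'' : Fin (K+1) → X → X := fun j => l.get (Fin.cast hlenN.symm j) with hTs''def
    have hTs''mem : ∀ j, Ts'' j ∈ 𝒯 := by
      intro j
      have hmem' : Ts'' j ∈ l := List.get_mem l _
      obtain ⟨k, hk⟩ := hmem _ hmem'
      rw [hk]
      exact hTs'mem k
    have key : ∀ x, ∑ j : Fin (K+1), f (Ts'' j x) = ∑ k : Fin (n+1), (m' k:ℝ) * f (Ts' k x) := by
      intro x
      have e1 : ∑ j : Fin (K+1), f (Ts'' j x) = ∑ i : Fin l.length, f (l.get i x) := by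
        apply Fintype.sum_equiv (finCongr hlenN.symm)
        intro i
        rfl
      rw [e1, ← list_map_sum_get l (fun T => f (T x)), hsuml (fun T => f (T x))]
    set h' : X → ℝ := fun x => (∑ k : Fin (K+1), f (Ts'' k x)) / ((K:ℝ)+1) with hh'def
    have hh'g : IsGamble h' := by
      refine isGamble_iff.2 ⟨M, fun x => ?_⟩
      rw [hh'def]
      simp only []
      rw [abs_div, abs_of_pos hN, div_le_iff₀ hN]
      calc |∑ k : Fin (K+1), f (Ts'' k x)| ≤ ∑ k : Fin (K+1), |f (Ts'' k x)| :=
            Finset.abs_sum_le_sum_abs _ _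
      _ ≤ ∑ _k : Fin (K+1), M := Finset.sum_le_sum fun k _ => hM _
      _ = M * ((K:ℝ)+1) := by
          rw [Finset.sum_const, Finset.card_univ, Fintype.card_fin, nsmul_eq_mul]
          push_cast; ring
    have hcoefsum : ∑ k : Fin n, (lam k - (m k:ℝ)/((K:ℝ)+1)) = (d:ℝ)/((K:ℝ)+1) := by
      rw [Finset.sum_sub_distrib, h1, ← Finset.sum_div, hdR]
      field_simp
    have hupper : ∀ x, S f x ≤ h' x + ε := by
      intro x
      rw [hSf, hh'def]
      simp only []
      rw [key x, Fin.sum_univ_castSucc]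
      simp only [hm'def, hTs'def, Fin.snoc_castSucc, Fin.snoc_last, id_eq]
      have hsplit : ((∑ k : Fin n, (m k:ℝ) * f (Ts k x)) + (d:ℝ) * f x) / ((K:ℝ)+1)
          = (∑ k : Fin n, ((m k:ℝ)/((K:ℝ)+1)) * f (Ts k x)) + ((d:ℝ)/((K:ℝ)+1)) * f x := by
        rw [add_div, Finset.sum_div]
        congr 1
        · exact Finset.sum_congr rfl fun k _ => by ring
        · ring
      rw [hsplit]
      have hdiff : ∑ k : Fin n, lam k * f (Ts k x)
          - ∑ k : Fin n, ((m k:ℝ)/((K:ℝ)+1)) * f (Ts k x)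
          = ∑ k : Fin n, (lam k - (m k:ℝ)/((K:ℝ)+1)) * f (Ts k x) := by
        rw [← Finset.sum_sub_distrib]
        exact Finset.sum_congr rfl fun k _ => by ring
      have hcoef : ∀ k : Fin n, 0 ≤ lam k - (m k:ℝ)/((K:ℝ)+1) := by
        intro k
        rw [sub_nonneg, div_le_iff₀ hN]
        exact hm_le k
      have hbound1 : ∑ k : Fin n, (lam k - (m k:ℝ)/((K:ℝ)+1)) * f (Ts k x)
          ≤ ((d:ℝ)/((K:ℝ)+1)) * M := by
        calc ∑ k : Fin n, (lam k - (m k:ℝ)/((K:ℝ)+1)) * f (Ts k x)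
            ≤ ∑ k : Fin n, (lam k - (m k:ℝ)/((K:ℝ)+1)) * M :=
              Finset.sum_le_sum fun k _ =>
                mul_le_mul_of_nonneg_left ((abs_le.1 (hM _)).2) (hcoef k)
        _ = ((d:ℝ)/((K:ℝ)+1)) * M := by rw [← Finset.sum_mul, hcoefsum]
      have hd0 : (0:ℝ) ≤ (d:ℝ)/((K:ℝ)+1) := by positivity
      have hbound2 : -(((d:ℝ)/((K:ℝ)+1)) * f x) ≤ ((d:ℝ)/((K:ℝ)+1)) * M := by
        rw [← mul_neg]
        exact mul_le_mul_of_nonneg_left (by linarith [(abs_le.1 (hM x)).1]) hd0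
      have hεbig : 2 * ((d:ℝ)/((K:ℝ)+1)) * M ≤ ε := by
        have heq2 : 2 * ((d:ℝ)/((K:ℝ)+1)) * M = (2*(d:ℝ)*M)/((K:ℝ)+1) := by ring
        rw [heq2, div_le_iff₀ hN]
        nlinarith
      linarith [hdiff ▸ hbound1]
    have hL1 : L (S f) ≤ L h' + ε := L_le_add hL hSfg hh'g hupper
    have hUmem : L h' ∈ U := ⟨K, Ts'', hTs''mem, rfl⟩
    have hL2 : L h' ≤ sSup U := le_csSup hUbdd hUmem
    linarith
  · exact csSup_le hUne fun r hr => le_csSup (Qset_bdd hL f hf) (hsub hr)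

end Part2

theorem stmt10 (X : Type*) [Nonempty X] (𝒯 : Set (X → X))
    (h𝒯 : IsTransformationMonoid 𝒯) (hMS : MooreSmith 𝒯)
    (L : (X → ℝ) → ℝ) (hL : IsCoherentLowerPrevision L)
    (hweak : ∀ f : X → ℝ, IsGamble f → ∀ T ∈ 𝒯, L f ≤ L (f ∘ T)) :
    (∀ f : X → ℝ, IsGamble f → ∀ ε : ℝ, 0 < ε → ∃ S₀ ∈ ConvMix 𝒯,
        ∀ S ∈ ConvMix 𝒯, Succ 𝒯 S S₀ → |L (S f) - Qfun 𝒯 L f| < ε) ∧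
    (∀ f : X → ℝ, IsGamble f →
        Qfun 𝒯 L f = sSup {r : ℝ | ∃ (n : ℕ) (Ts : Fin (n+1) → X → X),
          (∀ k, Ts k ∈ 𝒯) ∧
          r = L (fun x => (∑ k, f (Ts k x)) / ((n : ℝ) + 1))}) ∧
    IsCoherentLowerPrevision (Qfun 𝒯 L) ∧
    (∀ f : X → ℝ, IsGamble f → ∀ T ∈ 𝒯,
        0 ≤ Qfun 𝒯 L (f - f ∘ T) ∧ 0 ≤ Qfun 𝒯 L (f ∘ T - f)) ∧
    (∀ f : X → ℝ, IsGamble f → L f ≤ Qfun 𝒯 L f) ∧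
    (∀ M : (X → ℝ) → ℝ, IsCoherentLowerPrevision M →
      (∀ f : X → ℝ, IsGamble f → ∀ T ∈ 𝒯,
        0 ≤ M (f - f ∘ T) ∧ 0 ≤ M (f ∘ T - f)) →
      (∀ f : X → ℝ, IsGamble f → L f ≤ M f) →
      ∀ f : X → ℝ, IsGamble f → Qfun 𝒯 L f ≤ M f) := by
  exact ⟨part1 hL h𝒯 hweak, part2 hL h𝒯, part3 hL h𝒯 hweak hMS,
    part4 hL h𝒯 hweak, fun f hf => Q_ge_L hL h𝒯 hf, part6 hL h𝒯 hweak⟩
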